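/- Let d n : ℕ with d, n ≥ 1. Let ρA : Matrix (Fin d) (Fin d) ℂ be positive definite and let μ : Fin n → ℝ with 0 < μ s for all s. Let σ½ := ρA½ ⊗ₖ Matrix.diagonal (fun s => (Real.sqrt (μ s) : ℂ)), where ρA½ is the positive semidefinite square root of ρA. Then { X : Matrix (Fin d × Fin n) (Fin d × Fin n) ℂ | X is positive semidefinite and Γ(X) is positive semidefinite } = { X | X is positive semidefinite } ∩ closure { ∑ k, ∑ l, (a l ⊗ₖ (b k)ᴴ) * σ½ * ((a k)ᴴ ⊗ₖ b l) | N : ℕ, a : Fin N → Matrix (Fin d) (Fin d) ℂ, b : Fin N → Matrix (Fin n) (Fin n) ℂ }. -/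

import Mathlib

open Matrix ComplexOrder Kronecker

/-- Partial transpose with respect to the second tensor factor. -/
def partialTranspose {d n : ℕ} (X : Matrix (Fin d × Fin n) (Fin d × Fin n) ℂ) :
    Matrix (Fin d × Fin n) (Fin d × Fin n) ℂ :=
  fun p q => X (p.1, q.2) (q.1, p.2)

/-- σ½ = ρA^{1/2} ⊗ₖ diagonal(√μ): the square root of the product density matrix. -/
noncomputable def sigmaHalf {d n : ℕ} (ρA : Matrix (Fin d) (Fin d) ℂ) (hρA : ρA.PosDef)
    (μ : Fin n → ℝ) : Matrix (Fin d × Fin n) (Fin d × Fin n) ℂ :=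
  ((hρA.posSemidef.1.eigenvectorUnitary : Matrix (Fin d) (Fin d) ℂ) *
      Matrix.diagonal ((↑) ∘ Real.sqrt ∘ hρA.posSemidef.1.eigenvalues) *
      (star hρA.posSemidef.1.eigenvectorUnitary : Matrix (Fin d) (Fin d) ℂ)) ⊗ₖ Matrix.diagonal (fun s => ((Real.sqrt (μ s) : ℝ) : ℂ))

namespace Matrix.PosSemidef

variable {m : Type*} [Fintype m] [DecidableEq m] {A : Matrix m m ℂ}

/-- The positive semidefinite square root, via the spectral decomposition. -/
noncomputable def sqrt (hA : A.PosSemidef) : Matrix m m ℂ :=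
  (hA.1.eigenvectorUnitary : Matrix m m ℂ) *
      Matrix.diagonal ((↑) ∘ Real.sqrt ∘ hA.1.eigenvalues) *
      (star hA.1.eigenvectorUnitary : Matrix m m ℂ)

lemma sqrt_mul_self (hA : A.PosSemidef) : hA.sqrt * hA.sqrt = A := by
  have hU : (star hA.1.eigenvectorUnitary : Matrix m m ℂ) *
      (hA.1.eigenvectorUnitary : Matrix m m ℂ) = 1 := by simp
  have hD : Matrix.diagonal (((↑) ∘ Real.sqrt ∘ hA.1.eigenvalues) : m → ℂ) *
      Matrix.diagonal (((↑) ∘ Real.sqrt ∘ hA.1.eigenvalues) : m → ℂ) =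
      Matrix.diagonal (RCLike.ofReal ∘ hA.1.eigenvalues) := by
    rw [diagonal_mul_diagonal]
    congr 1
    funext i
    simp only [Function.comp]
    rw [← Complex.ofReal_mul, Real.mul_self_sqrt (hA.eigenvalues_nonneg i)]
    rfl
  conv_rhs => rw [hA.1.spectral_theorem, Unitary.conjStarAlgAut_apply]
  simp only [sqrt, Matrix.mul_assoc]
  rw [← Matrix.mul_assoc (star hA.1.eigenvectorUnitary : Matrix m m ℂ), hU, Matrix.one_mul,
    ← Matrix.mul_assoc (Matrix.diagonal _) (Matrix.diagonal _), hD]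

lemma posSemidef_sqrt (hA : A.PosSemidef) : hA.sqrt.PosSemidef := by
  have hD : (Matrix.diagonal (((↑) ∘ Real.sqrt ∘ hA.1.eigenvalues) : m → ℂ)).PosSemidef :=
    PosSemidef.diagonal (fun i => Complex.zero_le_real.mpr (Real.sqrt_nonneg _))
  have := hD.mul_mul_conjTranspose_same (hA.1.eigenvectorUnitary : Matrix m m ℂ)
  unfold sqrt
  rwa [star_eq_conjTranspose]

end Matrix.PosSemidef

lemma posSemidef_iff_eq_transpose_mul_self {m : Type*} [Fintype m] [DecidableEq m]
    {A : Matrix m m ℂ} : A.PosSemidef ↔ ∃ B : Matrix m m ℂ, A = Bᴴ * B := by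
  constructor
  · intro h
    exact ⟨h.sqrt, by rw [h.posSemidef_sqrt.1.eq, h.sqrt_mul_self]⟩
  · rintro ⟨B, rfl⟩
    exact posSemidef_conjTranspose_mul_self B

lemma sigmaHalf_eq {d n : ℕ} (ρA : Matrix (Fin d) (Fin d) ℂ) (hρA : ρA.PosDef)
    (μ : Fin n → ℝ) : sigmaHalf ρA hρA μ =
      hρA.posSemidef.sqrt ⊗ₖ Matrix.diagonal (fun s => ((Real.sqrt (μ s) : ℝ) : ℂ)) := rfl

section Aux

variable {d n : ℕ}

lemma pt_pt (X : Matrix (Fin d × Fin n) (Fin d × Fin n) ℂ) :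
    partialTranspose (partialTranspose X) = X := rfl

lemma pt_sum {ι : Type*} (s : Finset ι) (f : ι → Matrix (Fin d × Fin n) (Fin d × Fin n) ℂ) :
    partialTranspose (∑ i ∈ s, f i) = ∑ i ∈ s, partialTranspose (f i) := by
  funext p q
  simp [partialTranspose, Matrix.sum_apply]

lemma pt_kron (A : Matrix (Fin d) (Fin d) ℂ) (B : Matrix (Fin n) (Fin n) ℂ) :
    partialTranspose (A ⊗ₖ B) = A ⊗ₖ Bᵀ := rfl

lemma cont_entry {m m' : Type*} (i : m) (j : m') :
    Continuous fun X : Matrix m m' ℂ => X i j :=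
  (continuous_apply j).comp (continuous_apply i)

lemma pt_continuous :
    Continuous (partialTranspose (d := d) (n := n)) := by
  refine continuous_pi fun p => continuous_pi fun q => ?_
  exact cont_entry _ _

lemma isClosed_psd {m : Type*} [Fintype m] :
    IsClosed {X : Matrix m m ℂ | X.PosSemidef} := by
  have h1 : IsClosed {X : Matrix m m ℂ | X.IsHermitian} := by
    have hc : Continuous fun X : Matrix m m ℂ => Xᴴ :=
      continuous_pi fun i => continuous_pi fun j => continuous_star.comp (cont_entry j i)
    exact isClosed_eq hc continuous_id
  have hnn : IsClosed {z : ℂ | 0 ≤ z} := by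
    have : {z : ℂ | 0 ≤ z} = Complex.re ⁻¹' Set.Ici 0 ∩ Complex.im ⁻¹' {0} := by
      ext z
      simp only [Set.mem_setOf_eq, Set.mem_inter_iff, Set.mem_preimage, Set.mem_Ici,
        Set.mem_singleton_iff, Complex.le_def, Complex.zero_re, Complex.zero_im]
      tauto
    rw [this]
    exact (isClosed_Ici.preimage Complex.continuous_re).inter
      (isClosed_singleton.preimage Complex.continuous_im)
  have h2 : IsClosed {X : Matrix m m ℂ | ∀ x : m → ℂ, 0 ≤ star x ⬝ᵥ X *ᵥ x} := by
    have heq : {X : Matrix m m ℂ | ∀ x : m → ℂ, 0 ≤ star x ⬝ᵥ X *ᵥ x} =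
        ⋂ x : m → ℂ, {X : Matrix m m ℂ | 0 ≤ star x ⬝ᵥ X *ᵥ x} := by
      ext X; simp
    rw [heq]
    refine isClosed_iInter fun x => ?_
    have hc : Continuous fun X : Matrix m m ℂ => star x ⬝ᵥ X *ᵥ x := by
      have : (fun X : Matrix m m ℂ => star x ⬝ᵥ X *ᵥ x) =
          fun X : Matrix m m ℂ => ∑ i, star (x i) * ∑ j, X i j * x j := by
        funext X
        simp [dotProduct, mulVec]
      rw [this]
      exact continuous_finset_sum _ fun i _ => continuous_const.mul
        (continuous_finset_sum _ fun j _ => (cont_entry i j).mul continuous_const)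
    exact hnn.preimage hc
  have : {X : Matrix m m ℂ | X.PosSemidef} =
      {X : Matrix m m ℂ | X.IsHermitian} ∩ {X : Matrix m m ℂ | ∀ x : m → ℂ, 0 ≤ star x ⬝ᵥ X *ᵥ x} := by
    ext X
    exact ⟨fun h => ⟨h.1, (posSemidef_iff_dotProduct_mulVec.mp h).2⟩,
      fun h => posSemidef_iff_dotProduct_mulVec.mpr ⟨h.1, h.2⟩⟩
  rw [this]
  exact h1.inter h2

lemma kron_conjT {m p : Type*} (A : Matrix m m ℂ) (B : Matrix p p ℂ) :
    (A ⊗ₖ B)ᴴ = Aᴴ ⊗ₖ Bᴴ := by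
  ext ⟨i, s⟩ ⟨j, t⟩
  exact star_mul' _ _

lemma conjT_transpose {p : Type*} (B : Matrix p p ℂ) : (Bᴴ)ᵀ = (Bᵀ)ᴴ := by
  ext i j
  simp [conjTranspose_apply]

variable (ρA : Matrix (Fin d) (Fin d) ℂ) (hρA : ρA.PosDef) (μ : Fin n → ℝ)

lemma sigma_psd : (sigmaHalf ρA hρA μ).PosSemidef := by
  obtain ⟨B, hB⟩ := posSemidef_iff_eq_transpose_mul_self.mp hρA.posSemidef.posSemidef_sqrt
  have hD : (Matrix.diagonal (fun s => ((Real.sqrt (μ s) : ℝ) : ℂ))).PosSemidef := by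
    refine Matrix.PosSemidef.diagonal ?_
    intro s
    simpa using Complex.ofReal_nonneg.mpr (Real.sqrt_nonneg (μ s))
  obtain ⟨E, hE⟩ := posSemidef_iff_eq_transpose_mul_self.mp hD
  rw [posSemidef_iff_eq_transpose_mul_self]
  refine ⟨B ⊗ₖ E, ?_⟩
  rw [sigmaHalf_eq]
  rw [hB, hE, kron_conjT, ← mul_kronecker_mul]

lemma sigma_det_ne (hμ : ∀ s, 0 < μ s) : (sigmaHalf ρA hρA μ).det ≠ 0 := by
  rw [sigmaHalf_eq]
  rw [det_kronecker]
  have hP : (hρA.posSemidef.sqrt).det ≠ 0 := by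
    intro h
    have : ρA.det = 0 := by
      rw [← hρA.posSemidef.sqrt_mul_self, det_mul, h, mul_zero]
    exact hρA.det_pos.ne' this
  have hDdet : (Matrix.diagonal (fun s => ((Real.sqrt (μ s) : ℝ) : ℂ))).det ≠ 0 := by
    rw [det_diagonal]
    refine Finset.prod_ne_zero_iff.mpr fun s _ => ?_
    exact_mod_cast (Real.sqrt_pos.mpr (hμ s)).ne'
  exact mul_ne_zero (pow_ne_zero _ hP) (pow_ne_zero _ hDdet)

lemma keyA {N : ℕ} (a : Fin N → Matrix (Fin d) (Fin d) ℂ)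
    (b : Fin N → Matrix (Fin n) (Fin n) ℂ) :
    partialTranspose (∑ k, ∑ l,
        (a l ⊗ₖ (b k)ᴴ) * sigmaHalf ρA hρA μ * ((a k)ᴴ ⊗ₖ b l)) =
      (∑ k, a k ⊗ₖ (b k)ᵀ) * sigmaHalf ρA hρA μ * (∑ k, a k ⊗ₖ (b k)ᵀ)ᴴ := by
  set P := hρA.posSemidef.sqrt with hP
  set D := Matrix.diagonal (fun s => ((Real.sqrt (μ s) : ℝ) : ℂ)) with hD
  have hσ : sigmaHalf ρA hρA μ = P ⊗ₖ D := rfl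
  have hterm : ∀ k l, partialTranspose ((a l ⊗ₖ (b k)ᴴ) * (P ⊗ₖ D) * ((a k)ᴴ ⊗ₖ b l)) =
      (a l ⊗ₖ (b l)ᵀ) * (P ⊗ₖ D) * (a k ⊗ₖ (b k)ᵀ)ᴴ := by
    intro k l
    have hDt : Dᵀ = D := by rw [hD, diagonal_transpose]
    have hb : ((b k)ᴴ * D * b l)ᵀ = (b l)ᵀ * D * ((b k)ᵀ)ᴴ := by
      rw [transpose_mul, transpose_mul, hDt, conjT_transpose, Matrix.mul_assoc]
    calc partialTranspose ((a l ⊗ₖ (b k)ᴴ) * (P ⊗ₖ D) * ((a k)ᴴ ⊗ₖ b l))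
        = (a l * P * (a k)ᴴ) ⊗ₖ (((b k)ᴴ * D * b l)ᵀ) := by
          rw [← mul_kronecker_mul, ← mul_kronecker_mul, pt_kron]
      _ = (a l * P * (a k)ᴴ) ⊗ₖ ((b l)ᵀ * D * ((b k)ᵀ)ᴴ) := by rw [hb]
      _ = (a l ⊗ₖ (b l)ᵀ) * (P ⊗ₖ D) * (a k ⊗ₖ (b k)ᵀ)ᴴ := by
          rw [kron_conjT, mul_kronecker_mul, mul_kronecker_mul]
  rw [hσ, pt_sum]
  have : ∀ k, partialTranspose (∑ l, (a l ⊗ₖ (b k)ᴴ) * (P ⊗ₖ D) * ((a k)ᴴ ⊗ₖ b l)) =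
      (∑ l, a l ⊗ₖ (b l)ᵀ) * (P ⊗ₖ D) * (a k ⊗ₖ (b k)ᵀ)ᴴ := by
    intro k
    rw [pt_sum]
    rw [Finset.sum_congr rfl fun l _ => hterm k l]
    rw [← Finset.sum_mul, ← Finset.sum_mul]
  rw [Finset.sum_congr rfl fun k _ => this k]
  rw [← Finset.mul_sum, ← conjTranspose_sum]

lemma decomp (C : Matrix (Fin d × Fin n) (Fin d × Fin n) ℂ) :
    ∃ (N : ℕ) (a : Fin N → Matrix (Fin d) (Fin d) ℂ)
      (b : Fin N → Matrix (Fin n) (Fin n) ℂ),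
      ∑ k, a k ⊗ₖ (b k)ᵀ = C := by
  refine ⟨n * n,
    fun K => Matrix.of fun i j =>
      C (i, (finProdFinEquiv.symm K).1) (j, (finProdFinEquiv.symm K).2),
    fun K => (Matrix.of fun s t =>
      if finProdFinEquiv.symm K = (s, t) then (1 : ℂ) else 0)ᵀ, ?_⟩
  ext ⟨i, u⟩ ⟨j, v⟩
  rw [Matrix.sum_apply]
  have hre : ∀ K : Fin (n * n),
      ((Matrix.of fun i j =>
          C (i, (finProdFinEquiv.symm K).1) (j, (finProdFinEquiv.symm K).2)) ⊗ₖ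
        ((Matrix.of fun s t =>
          if finProdFinEquiv.symm K = (s, t) then (1 : ℂ) else 0)ᵀ)ᵀ) (i, u) (j, v) =
      (fun p : Fin n × Fin n =>
        C (i, p.1) (j, p.2) * if p = (u, v) then (1 : ℂ) else 0) (finProdFinEquiv.symm K) := by
    intro K
    simp [transpose_transpose]
  rw [Finset.sum_congr rfl fun K _ => hre K]
  calc ∑ K : Fin (n * n), (fun p : Fin n × Fin n =>
          C (i, p.1) (j, p.2) * if p = (u, v) then (1 : ℂ) else 0) (finProdFinEquiv.symm K)
      = ∑ p : Fin n × Fin n, C (i, p.1) (j, p.2) * if p = (u, v) then (1 : ℂ) else 0 :=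
        Fintype.sum_equiv finProdFinEquiv.symm _ _ (fun K => rfl)
    _ = C (i, u) (j, v) := by
        simp [mul_ite, mul_one, mul_zero, Finset.sum_ite_eq']

end Aux

theorem stmt_5 {d n : ℕ} (hd : 1 ≤ d) (hn : 1 ≤ n)
    (ρA : Matrix (Fin d) (Fin d) ℂ) (hρA : ρA.PosDef)
    (μ : Fin n → ℝ) (hμ : ∀ s, 0 < μ s) :
    { X : Matrix (Fin d × Fin n) (Fin d × Fin n) ℂ |
        X.PosSemidef ∧ (partialTranspose X).PosSemidef } =
      { X : Matrix (Fin d × Fin n) (Fin d × Fin n) ℂ | X.PosSemidef } ∩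
      closure { X : Matrix (Fin d × Fin n) (Fin d × Fin n) ℂ |
        ∃ (N : ℕ) (a : Fin N → Matrix (Fin d) (Fin d) ℂ)
          (b : Fin N → Matrix (Fin n) (Fin n) ℂ),
          X = ∑ k, ∑ l,
            (a l ⊗ₖ (b k)ᴴ) * sigmaHalf ρA hρA μ * ((a k)ᴴ ⊗ₖ b l) } := by
  ext X
  simp only [Set.mem_setOf_eq, Set.mem_inter_iff]
  constructor
  · rintro ⟨hX, hΓ⟩
    refine ⟨hX, subset_closure ?_⟩
    set σ := sigmaHalf ρA hρA μ with hσdef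
    have hσ := sigma_psd ρA hρA μ
    set τ := hσ.sqrt with hτdef
    have hτH : τᴴ = τ := hσ.posSemidef_sqrt.1
    have hτdet : IsUnit τ.det := by
      have hmul : τ.det * τ.det = σ.det := by
        rw [← det_mul, hσ.sqrt_mul_self]
      refine isUnit_iff_ne_zero.mpr fun h => ?_
      exact sigma_det_ne ρA hρA μ hμ (by rw [← hmul, h, mul_zero])
    set Cm := hΓ.sqrt * τ⁻¹ with hCm
    have hC : Cm * σ * Cmᴴ = partialTranspose X := by
      have hsH : hΓ.sqrt ᴴ = hΓ.sqrt := hΓ.posSemidef_sqrt.1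
      rw [hCm, conjTranspose_mul, conjTranspose_nonsing_inv, hτH, hsH]
      have hσττ : σ = τ * τ := hσ.sqrt_mul_self.symm
      rw [hσττ]
      have h1 : τ⁻¹ * (τ * τ) * τ⁻¹ = 1 := by
        rw [← Matrix.mul_assoc, Matrix.nonsing_inv_mul _ hτdet, Matrix.one_mul,
          Matrix.mul_nonsing_inv _ hτdet]
      calc hΓ.sqrt * τ⁻¹ * (τ * τ) * (τ⁻¹ * hΓ.sqrt)
          = hΓ.sqrt * (τ⁻¹ * (τ * τ) * τ⁻¹) * hΓ.sqrt := by
            simp only [Matrix.mul_assoc]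
        _ = hΓ.sqrt * hΓ.sqrt := by rw [h1, Matrix.mul_one]
        _ = partialTranspose X := hΓ.sqrt_mul_self
    obtain ⟨N, a, b, hab⟩ := decomp Cm
    refine ⟨N, a, b, ?_⟩
    have h2 : partialTranspose (∑ k, ∑ l,
        (a l ⊗ₖ (b k)ᴴ) * σ * ((a k)ᴴ ⊗ₖ b l)) = partialTranspose X := by
      rw [keyA ρA hρA μ a b, hab, hC]
    have := congrArg partialTranspose h2
    rwa [pt_pt, pt_pt, eq_comm] at this
  · rintro ⟨hX, hcl⟩
    refine ⟨hX, ?_⟩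
    have hsub : { Y : Matrix (Fin d × Fin n) (Fin d × Fin n) ℂ |
        ∃ (N : ℕ) (a : Fin N → Matrix (Fin d) (Fin d) ℂ)
          (b : Fin N → Matrix (Fin n) (Fin n) ℂ),
          Y = ∑ k, ∑ l,
            (a l ⊗ₖ (b k)ᴴ) * sigmaHalf ρA hρA μ * ((a k)ᴴ ⊗ₖ b l) } ⊆
        { Y : Matrix (Fin d × Fin n) (Fin d × Fin n) ℂ |
          (partialTranspose Y).PosSemidef } := by
      rintro Y ⟨N, a, b, rfl⟩
      rw [Set.mem_setOf_eq, keyA ρA hρA μ a b]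
      exact (sigma_psd ρA hρA μ).mul_mul_conjTranspose_same _
    have hT : IsClosed { Y : Matrix (Fin d × Fin n) (Fin d × Fin n) ℂ |
        (partialTranspose Y).PosSemidef } :=
      isClosed_psd.preimage pt_continuous
    exact closure_minimal hsub hT hcl
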